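/- Let (Y_i) be i.i.d. random variables independent of a Poisson variable N with parameter θ, with E|Y_1| < ∞. Then for any bounded measurable l, E[(Σ_{i=1}^N Y_i) · l(Σ_{i=1}^N Y_i)] = θ · E[Y' · l(Σ_{i=1}^N Y_i + Y')], where Y' is an independent copy of Y_1. -/

import Mathlib

open MeasureTheory ProbabilityTheory

/-- Index type for the family consisting of the Poisson count (`none`) and the
jump sizes (`some i`). -/
def jumpIndexType : Option ℕ → Type
  | none => ℕ
  | some _ => ℝ

instance jumpIndexTypeMeasurableSpace : ∀ o : Option ℕ, MeasurableSpace (jumpIndexType o)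
  | none => inferInstanceAs (MeasurableSpace ℕ)
  | some _ => inferInstanceAs (MeasurableSpace ℝ)

/-- The family of random variables `N, Y₀, Y₁, Y₂, …` seen as one dependent family. -/
def jumpFamily {Ω : Type*} (N : Ω → ℕ) (Y : ℕ → Ω → ℝ) :
    (o : Option ℕ) → Ω → jumpIndexType o
  | none => N
  | some i => Y i

set_option linter.unusedSectionVars false

section CPSHelpers

variable {Ω : Type*} [MeasureSpace Ω] [IsProbabilityMeasure (ℙ : Measure Ω)]

/-- Partial sums of the jumps `Y₁ + ⋯ + Y_k`. -/
def cpsS (Y : ℕ → Ω → ℝ) (k : ℕ) (ω : Ω) : ℝ := ∑ i ∈ Finset.range k, Y (i + 1) ω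

/-- Auxiliary family of sets used in the product-law computation. -/
def cpsSets {m : ℕ} (t : Fin m → ℕ) (s : Fin m → Set ℝ) :
    ∀ o : Option ℕ, Set (jumpIndexType o)
  | none => Set.univ
  | some i => ⋂ j ∈ Finset.univ.filter (fun j => t j = i), s j

/-- Transfer of mutual independence along a.e. equality. -/
lemma iIndepFun_congr_ae {ι : Type*} {β : ι → Type*} [mβ : ∀ i, MeasurableSpace (β i)]
    {f g : ∀ i, Ω → β i} (hf : iIndepFun f ℙ) (h : ∀ i, f i =ᵐ[ℙ] g i) :
    iIndepFun g ℙ := by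
  rw [iIndepFun_iff_measure_inter_preimage_eq_mul] at hf ⊢
  intro S sets hsets
  have hae : ∀ i ∈ (S : Set ι), f i ⁻¹' sets i =ᵐ[ℙ] g i ⁻¹' sets i := by
    intro i _
    apply Filter.eventuallyEq_set.2
    filter_upwards [h i] with ω hω
    simp [Set.mem_preimage, hω]
  have h1 : (⋂ i ∈ S, f i ⁻¹' sets i) =ᵐ[ℙ] (⋂ i ∈ S, g i ⁻¹' sets i) := by
    apply Filter.eventuallyEq_set.2
    have := (ae_ball_iff S.countable_toSet).2 (fun i _ => h i)
    filter_upwards [this] with ω hω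
    simp only [Set.mem_iInter, Set.mem_preimage]
    exact ⟨fun H i hi => (hω i hi) ▸ H i hi, fun H i hi => (hω i hi) ▸ H i hi⟩
  rw [← measure_congr h1, hf S hsets]
  exact Finset.prod_congr rfl fun i hi => measure_congr (hae i hi)

variable (N : Ω → ℕ) (Y : ℕ → Ω → ℝ)

/-- Joint law of finitely many distinct jumps is the product of the common law. -/
lemma cps_law
    (hIndep : iIndepFun (jumpFamily N Y) ℙ)
    (hmY : ∀ i, Measurable (Y i))
    (hident : ∀ i, Measure.map (Y i) ℙ = Measure.map (Y 0) ℙ)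
    {m : ℕ} {t : Fin m → ℕ} (ht : Function.Injective t) :
    Measure.map (fun ω (j : Fin m) => Y (t j) ω) ℙ
      = Measure.pi (fun _ : Fin m => Measure.map (Y 0) ℙ) := by
  haveI : IsProbabilityMeasure (Measure.map (Y 0) ℙ) :=
    Measure.isProbabilityMeasure_map (hmY 0).aemeasurable
  refine (Measure.pi_eq fun s hs => ?_).symm
  have hvec : Measurable (fun ω (j : Fin m) => Y (t j) ω) :=
    measurable_pi_lambda _ fun j => hmY (t j)
  rw [Measure.map_apply hvec (MeasurableSet.univ_pi hs)]
  have hAt : ∀ j : Fin m, cpsSets t s (some (t j)) = s j := by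
    intro j
    have hfil : Finset.univ.filter (fun j' => t j' = t j) = {j} := by
      ext j'; simp [ht.eq_iff]
    show (⋂ j' ∈ Finset.univ.filter (fun j' => t j' = t j), s j' : Set ℝ) = s j
    simp [hfil]
  have key := hIndep.measure_inter_preimage_eq_mul
      (Finset.univ.image fun j : Fin m => (some (t j) : Option ℕ)) (sets := cpsSets t s) ?_
  · have hset : (⋂ o ∈ Finset.univ.image (fun j : Fin m => (some (t j) : Option ℕ)),
        jumpFamily N Y o ⁻¹' cpsSets t s o)
        = (fun ω (j : Fin m) => Y (t j) ω) ⁻¹' Set.pi Set.univ s := by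
      ext ω
      simp only [Set.mem_iInter, Finset.mem_image, Finset.mem_univ, true_and,
        Set.mem_preimage, Set.mem_pi, Set.mem_univ, forall_true_left]
      constructor
      · intro H j
        have := H (some (t j)) ⟨j, rfl⟩
        rwa [hAt j] at this
      · rintro H o ⟨j, rfl⟩
        show Y (t j) ω ∈ cpsSets t s (some (t j))
        rw [hAt j]; exact H j
    rw [← hset, key]
    rw [Finset.prod_image (by intro a _ b _ hab; exact ht (Option.some_injective ℕ hab))]
    refine Finset.prod_congr rfl fun j _ => ?_
    show (ℙ : Measure Ω) (Y (t j) ⁻¹' cpsSets t s (some (t j))) = _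
    rw [hAt j, ← Measure.map_apply (hmY (t j)) (hs j), hident (t j)]
  · intro o ho
    obtain ⟨j, -, rfl⟩ := Finset.mem_image.1 ho
    show MeasurableSet[jumpIndexTypeMeasurableSpace (some (t j))]
      (⋂ j' ∈ Finset.univ.filter (fun j' => t j' = t j), s j')
    exact Finset.measurableSet_biInter _ fun j' _ => hs j'

/-- `N` is independent of any finite tuple of jumps. -/
lemma cps_indep (hmN : Measurable N) (hmY : ∀ i, Measurable (Y i))
    (hIndep : iIndepFun (jumpFamily N Y) ℙ)
    {m : ℕ} (t : Fin m → ℕ) :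
    IndepFun N (fun ω (j : Fin m) => Y (t j) ω) ℙ := by
  have hfm : ∀ o, Measurable (jumpFamily N Y o) := by
    rintro (_ | i)
    · exact hmN
    · exact hmY i
  have hd : Disjoint ({none} : Finset (Option ℕ))
      (Finset.univ.image fun j : Fin m => (some (t j) : Option ℕ)) := by
    simp [Finset.disjoint_left]
  have base := hIndep.indepFun_finset {none}
    (Finset.univ.image fun j : Fin m => (some (t j) : Option ℕ)) hd hfm
  have hφ : Measurable (fun v : (∀ i : ({none} : Finset (Option ℕ)), jumpIndexType i) =>
      v ⟨none, Finset.mem_singleton_self none⟩) := measurable_pi_apply _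
  have hψ : Measurable (fun v : (∀ i : (Finset.univ.image
        fun j : Fin m => (some (t j) : Option ℕ)), jumpIndexType i) =>
      fun j : Fin m => v ⟨some (t j), Finset.mem_image_of_mem _ (Finset.mem_univ j)⟩) :=
    measurable_pi_lambda _ fun j => measurable_pi_apply _
  exact base.comp hφ hψ

/-- Splitting off an indicator of `N` from a function of finitely many jumps. -/
lemma cps_split (hmN : Measurable N) (hmY : ∀ i, Measurable (Y i))
    (hIndep : iIndepFun (jumpFamily N Y) ℙ)
    {m : ℕ} (t : Fin m → ℕ) (k : ℕ) {F : (Fin m → ℝ) → ℝ} (hF : Measurable F) :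
    ∫ ω, (if N ω = k then (1 : ℝ) else 0) * F (fun j => Y (t j) ω) ∂(ℙ : Measure Ω)
      = ((ℙ : Measure Ω) (N ⁻¹' {k})).toReal
        * ∫ ω, F (fun j => Y (t j) ω) ∂(ℙ : Measure Ω) := by
  have hvec : Measurable (fun ω (j : Fin m) => Y (t j) ω) :=
    measurable_pi_lambda _ fun j => hmY (t j)
  have hφ : Measurable (fun n : ℕ => if n = k then (1 : ℝ) else 0) :=
    measurable_of_countable _
  have h := ((cps_indep N Y hmN hmY hIndep t).comp hφ hF).integral_fun_mul_eq_mul_integral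
    (hφ.comp hmN).aestronglyMeasurable (hF.comp hvec).aestronglyMeasurable
  have hind : ∫ ω, (if N ω = k then (1 : ℝ) else 0) ∂(ℙ : Measure Ω)
      = ((ℙ : Measure Ω) (N ⁻¹' {k})).toReal := by
    have heq : (fun ω => if N ω = k then (1 : ℝ) else 0)
        = (N ⁻¹' {k}).indicator (fun _ => (1 : ℝ)) := by
      funext ω
      by_cases h : N ω = k <;> simp [Set.indicator_apply, Set.mem_preimage, h]
    rw [heq, integral_indicator_const (1 : ℝ) (hmN (measurableSet_singleton k)), smul_eq_mul,
      mul_one]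
    rfl
  calc ∫ ω, (if N ω = k then (1 : ℝ) else 0) * F (fun j => Y (t j) ω) ∂(ℙ : Measure Ω)
      = (∫ ω, (if N ω = k then (1 : ℝ) else 0) ∂(ℙ : Measure Ω))
        * ∫ ω, F (fun j => Y (t j) ω) ∂(ℙ : Measure Ω) := h
    _ = _ := by rw [hind]

variable (l : ℝ → ℝ)

/-- Change of variables to the canonical product space. -/
lemma cps_E (hmY : ∀ i, Measurable (Y i))
    (hIndep : iIndepFun (jumpFamily N Y) ℙ)
    (hident : ∀ i, Measure.map (Y i) ℙ = Measure.map (Y 0) ℙ)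
    (hl : Measurable l)
    {m : ℕ} {t : Fin m → ℕ} (ht : Function.Injective t) (j₀ : Fin m) :
    ∫ ω, Y (t j₀) ω * l (∑ j, Y (t j) ω) ∂(ℙ : Measure Ω)
      = ∫ x : Fin m → ℝ, x j₀ * l (∑ j, x j)
          ∂(Measure.pi fun _ : Fin m => Measure.map (Y 0) ℙ) := by
  have hvec : Measurable (fun ω (j : Fin m) => Y (t j) ω) :=
    measurable_pi_lambda _ fun j => hmY (t j)
  have hF : Measurable (fun x : Fin m → ℝ => x j₀ * l (∑ j, x j)) :=
    (measurable_pi_apply j₀).mul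
      (hl.comp (Finset.measurable_sum _ fun j _ => measurable_pi_apply j))
  rw [← cps_law N Y hIndep hmY hident ht,
    integral_map hvec.aemeasurable hF.aestronglyMeasurable]

lemma cps_sum_fin (k : ℕ) (ω : Ω) : (∑ j : Fin k, Y ((j : ℕ) + 1) ω) = cpsS Y k ω :=
  Fin.sum_univ_eq_sum_range (fun i => Y (i + 1) ω) k

lemma cps_sum_split (m : ℕ) (ω : Ω) :
    (∑ j : Fin (m + 1), Y ((j : ℕ)) ω) = cpsS Y m ω + Y 0 ω := by
  rw [Fin.sum_univ_succ]
  simp only [Fin.val_zero, Fin.val_succ]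
  rw [Fin.sum_univ_eq_sum_range (fun i => Y (i + 1) ω) m]
  exact add_comm _ _

/-- Exchangeability: each of the first `m+1` jumps contributes equally. -/
lemma cps_exchange (hmY : ∀ i, Measurable (Y i))
    (hIndep : iIndepFun (jumpFamily N Y) ℙ)
    (hident : ∀ i, Measure.map (Y i) ℙ = Measure.map (Y 0) ℙ)
    (hl : Measurable l) (m : ℕ) (i : Fin (m + 1)) :
    ∫ ω, Y ((i : ℕ) + 1) ω * l (cpsS Y (m + 1) ω) ∂(ℙ : Measure Ω)
      = ∫ ω, Y 0 ω * l (cpsS Y m ω + Y 0 ω) ∂(ℙ : Measure Ω) := by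
  have ht1 : Function.Injective (fun j : Fin (m + 1) => (j : ℕ) + 1) := by
    intro a b h
    have h' : (a : ℕ) + 1 = (b : ℕ) + 1 := h
    exact Fin.val_injective (by omega)
  have E1 := cps_E N Y l hmY hIndep hident hl ht1 i
  simp only [cps_sum_fin] at E1
  set e := Equiv.swap (0 : Fin (m + 1)) i with he
  have ht2 : Function.Injective (fun j : Fin (m + 1) => ((e j : Fin (m + 1)) : ℕ) + 1) := by
    intro a b h
    have h' : ((e a : Fin (m + 1)) : ℕ) + 1 = ((e b : Fin (m + 1)) : ℕ) + 1 := h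
    exact e.injective (Fin.val_injective (by omega))
  have E2 := cps_E N Y l hmY hIndep hident hl ht2 0
  have hsum2 : ∀ ω : Ω, (∑ j : Fin (m + 1), Y (((e j : Fin (m + 1)) : ℕ) + 1) ω)
      = cpsS Y (m + 1) ω := by
    intro ω
    rw [Equiv.sum_comp e (fun j : Fin (m + 1) => Y ((j : ℕ) + 1) ω)]
    exact cps_sum_fin Y (m + 1) ω
  simp only [hsum2] at E2
  simp only [he, Equiv.swap_apply_left] at E2
  have ht3 : Function.Injective (fun j : Fin (m + 1) => (j : ℕ)) := Fin.val_injective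
  have E3 := cps_E N Y l hmY hIndep hident hl ht3 0
  simp only [cps_sum_split, Fin.val_zero] at E3
  exact E1.trans ((E1.symm.trans E2).trans E3.symm)

/-- Summands for the left-hand side decomposition over the value of `N`. -/
def cpsF (N : Ω → ℕ) (Y : ℕ → Ω → ℝ) (l : ℝ → ℝ) (k : ℕ) (ω : Ω) : ℝ :=
  (if N ω = k then (1 : ℝ) else 0) * (cpsS Y k ω * l (cpsS Y k ω))

/-- Summands for the right-hand side decomposition over the value of `N`. -/
def cpsG (N : Ω → ℕ) (Y : ℕ → Ω → ℝ) (l : ℝ → ℝ) (k : ℕ) (ω : Ω) : ℝ :=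
  (if N ω = k then (1 : ℝ) else 0) * (Y 0 ω * l (cpsS Y k ω + Y 0 ω))

theorem cps_main (θ : NNReal)
    (hmN : Measurable N) (hmY : ∀ i, Measurable (Y i))
    (hIndep : iIndepFun (jumpFamily N Y) ℙ)
    (hident : ∀ i : ℕ, Measure.map (Y i) ℙ = Measure.map (Y 0) ℙ)
    (hint : Integrable (Y 0) (ℙ : Measure Ω))
    (hN : Measure.map N ℙ = (poissonPMF θ).toMeasure)
    (hl : Measurable l) (hbdd : ∃ C : ℝ, ∀ x : ℝ, |l x| ≤ C) :
    ∫ ω, cpsS Y (N ω) ω * l (cpsS Y (N ω) ω) ∂(ℙ : Measure Ω)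
      = (θ : ℝ) * ∫ ω, Y 0 ω * l (cpsS Y (N ω) ω + Y 0 ω) ∂(ℙ : Measure Ω) := by
  obtain ⟨C, hC⟩ := hbdd
  have hC0 : 0 ≤ C := le_trans (abs_nonneg _) (hC 0)
  -- integrability of each jump
  have hYint : ∀ i, Integrable (Y i) (ℙ : Measure Ω) := by
    intro i
    have h0 : Integrable id (Measure.map (Y 0) ℙ) :=
      (integrable_map_measure aestronglyMeasurable_id (hmY 0).aemeasurable).2 hint
    exact (integrable_map_measure aestronglyMeasurable_id (hmY i).aemeasurable).1
      (by rwa [hident i])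
  have hmix : ∀ (A B : Ω → ℝ), Integrable A (ℙ : Measure Ω) → Measurable B →
      Integrable (fun ω => A ω * l (B ω)) (ℙ : Measure Ω) := by
    intro A B hA hB
    have := hA.bdd_mul (c := C) (hl.comp hB).aestronglyMeasurable
      (Filter.Eventually.of_forall fun ω => by simpa [Real.norm_eq_abs] using hC (B ω))
    simpa [mul_comm] using this
  have hSmeas : ∀ k, Measurable (cpsS Y k) := fun k =>
    Finset.measurable_sum _ fun i _ => hmY (i + 1)
  have hSint : ∀ k, Integrable (cpsS Y k) (ℙ : Measure Ω) := fun k =>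
    integrable_finset_sum _ fun i _ => hYint (i + 1)
  set M := ∫ ω, |Y 0 ω| ∂(ℙ : Measure Ω) with hM
  have hM0 : 0 ≤ M := integral_nonneg fun ω => abs_nonneg _
  have habsY : ∀ i, ∫ ω, |Y i ω| ∂(ℙ : Measure Ω) = M := by
    intro i
    rw [hM, ← integral_map (hmY i).aemeasurable measurable_abs.aestronglyMeasurable, hident i,
      integral_map (hmY 0).aemeasurable measurable_abs.aestronglyMeasurable]
  -- Poisson probabilities
  set p := fun k => ((ℙ : Measure Ω) (N ⁻¹' {k})).toReal with hp
  have hppmf : ∀ k, p k = poissonPMFReal θ k := by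
    intro k
    show ((ℙ : Measure Ω) (N ⁻¹' {k})).toReal = _
    rw [← Measure.map_apply hmN (measurableSet_singleton k), hN,
      (poissonPMF θ).toMeasure_apply_singleton k (measurableSet_singleton k)]
    show (ENNReal.ofReal (poissonPMFReal θ k)).toReal = _
    exact ENNReal.toReal_ofReal poissonPMFReal_nonneg
  have hpois : ∀ k : ℕ, ((k : ℝ) + 1) * poissonPMFReal θ (k + 1)
      = (θ : ℝ) * poissonPMFReal θ k := by
    intro k
    have hfac : ((k.factorial : ℝ)) ≠ 0 := Nat.cast_ne_zero.2 k.factorial_ne_zero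
    rw [poissonPMFReal, poissonPMFReal, Nat.factorial_succ]
    push_cast
    field_simp
    ring
  have hqsum : Summable (poissonPMFReal θ) := (poissonPMFRealSum θ).summable
  have hkq : Summable (fun k : ℕ => (k : ℝ) * poissonPMFReal θ k) := by
    have key : ∀ n : ℕ, ((n + 1 : ℕ) : ℝ) * poissonPMFReal θ (n + 1)
        = (θ : ℝ) * poissonPMFReal θ n := by
      intro n; push_cast; exact hpois n
    exact (summable_nat_add_iff 1).1 (by simpa only [key] using hqsum.mul_left (θ : ℝ))
  -- measurability of the canonical integrands
  have hsum_meas : ∀ m : ℕ, Measurable (fun x : Fin m → ℝ => ∑ j, x j) := fun m =>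
    Finset.measurable_sum _ fun j _ => measurable_pi_apply j
  -- the LHS pieces
  have hsplitf : ∀ k, ∫ ω, cpsF N Y l k ω ∂(ℙ : Measure Ω)
      = p k * ∫ ω, cpsS Y k ω * l (cpsS Y k ω) ∂(ℙ : Measure Ω) := by
    intro k
    have := cps_split N Y hmN hmY hIndep (fun j : Fin k => (j : ℕ) + 1) k
      (F := fun x => (∑ j, x j) * l (∑ j, x j)) ((hsum_meas k).mul (hl.comp (hsum_meas k)))
    simp only [cps_sum_fin] at this
    simpa only [cpsF] using this
  have hsplitfabs : ∀ k, ∫ ω, (if N ω = k then (1 : ℝ) else 0)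
        * |cpsS Y k ω * l (cpsS Y k ω)| ∂(ℙ : Measure Ω)
      = p k * ∫ ω, |cpsS Y k ω * l (cpsS Y k ω)| ∂(ℙ : Measure Ω) := by
    intro k
    have := cps_split N Y hmN hmY hIndep (fun j : Fin k => (j : ℕ) + 1) k
      (F := fun x => |(∑ j, x j) * l (∑ j, x j)|)
      ((hsum_meas k).mul (hl.comp (hsum_meas k))).abs
    simpa only [cps_sum_fin] using this
  have hf_int : ∀ k, Integrable (cpsF N Y l k) (ℙ : Measure Ω) := by
    intro k
    have h1 := hmix (cpsS Y k) (cpsS Y k) (hSint k) (hSmeas k)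
    exact h1.bdd_mul (c := 1) ((measurable_of_countable (fun n => if n = k then (1 : ℝ) else 0)).comp
        hmN).aestronglyMeasurable
      (Filter.Eventually.of_forall fun ω => by by_cases h : N ω = k <;> simp [h])
  have habsSl : ∀ k, ∫ ω, |cpsS Y k ω * l (cpsS Y k ω)| ∂(ℙ : Measure Ω) ≤ C * ((k : ℝ) * M) := by
    intro k
    have h1 : ∫ ω, |cpsS Y k ω * l (cpsS Y k ω)| ∂(ℙ : Measure Ω)
        ≤ ∫ ω, C * |cpsS Y k ω| ∂(ℙ : Measure Ω) := by
      refine integral_mono (hmix _ _ (hSint k) (hSmeas k)).abs ((hSint k).abs.const_mul C) ?_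
      intro ω
      show |cpsS Y k ω * l (cpsS Y k ω)| ≤ C * |cpsS Y k ω|
      rw [abs_mul]
      calc |cpsS Y k ω| * |l (cpsS Y k ω)| ≤ |cpsS Y k ω| * C :=
            mul_le_mul_of_nonneg_left (hC _) (abs_nonneg _)
        _ = C * |cpsS Y k ω| := mul_comm _ _
    have h2 : ∫ ω, |cpsS Y k ω| ∂(ℙ : Measure Ω) ≤ (k : ℝ) * M := by
      have h3 : ∫ ω, |cpsS Y k ω| ∂(ℙ : Measure Ω)
          ≤ ∫ ω, ∑ i ∈ Finset.range k, |Y (i + 1) ω| ∂(ℙ : Measure Ω) := by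
        refine integral_mono (hSint k).abs
          (integrable_finset_sum _ fun i _ => (hYint (i + 1)).abs) ?_
        intro ω
        show |cpsS Y k ω| ≤ ∑ i ∈ Finset.range k, |Y (i + 1) ω|
        exact Finset.abs_sum_le_sum_abs _ _
      rw [integral_finset_sum _ fun i _ => (hYint (i + 1)).abs] at h3
      calc ∫ ω, |cpsS Y k ω| ∂(ℙ : Measure Ω)
          ≤ ∑ i ∈ Finset.range k, ∫ ω, |Y (i + 1) ω| ∂(ℙ : Measure Ω) := h3
        _ = ∑ _i ∈ Finset.range k, M := Finset.sum_congr rfl fun i _ => habsY (i + 1)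
        _ = (k : ℝ) * M := by rw [Finset.sum_const, Finset.card_range, nsmul_eq_mul]
    calc ∫ ω, |cpsS Y k ω * l (cpsS Y k ω)| ∂(ℙ : Measure Ω)
        ≤ ∫ ω, C * |cpsS Y k ω| ∂(ℙ : Measure Ω) := h1
      _ = C * ∫ ω, |cpsS Y k ω| ∂(ℙ : Measure Ω) := integral_const_mul _ _
      _ ≤ C * ((k : ℝ) * M) := mul_le_mul_of_nonneg_left h2 hC0
  have hfnorm : ∀ k, ∫ ω, ‖cpsF N Y l k ω‖ ∂(ℙ : Measure Ω)
      = p k * ∫ ω, |cpsS Y k ω * l (cpsS Y k ω)| ∂(ℙ : Measure Ω) := by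
    intro k
    have heq : (fun ω => ‖cpsF N Y l k ω‖)
        = fun ω => (if N ω = k then (1 : ℝ) else 0) * |cpsS Y k ω * l (cpsS Y k ω)| := by
      funext ω
      by_cases h : N ω = k <;> simp [cpsF, h, Real.norm_eq_abs, abs_mul]
    rw [heq]
    exact hsplitfabs k
  have hf_sum : Summable fun k => ∫ ω, ‖cpsF N Y l k ω‖ ∂(ℙ : Measure Ω) := by
    refine Summable.of_nonneg_of_le (fun k => integral_nonneg fun ω => norm_nonneg _)
      (fun k => ?_) (f := fun k : ℕ => (C * M) * ((k : ℝ) * poissonPMFReal θ k)) ?_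
    · rw [hfnorm k, hppmf k]
      calc poissonPMFReal θ k * ∫ ω, |cpsS Y k ω * l (cpsS Y k ω)| ∂(ℙ : Measure Ω)
          ≤ poissonPMFReal θ k * (C * ((k : ℝ) * M)) :=
            mul_le_mul_of_nonneg_left (habsSl k) poissonPMFReal_nonneg
        _ = (C * M) * ((k : ℝ) * poissonPMFReal θ k) := by ring
    · exact hkq.mul_left _
  have hpt1 : ∀ ω, cpsS Y (N ω) ω * l (cpsS Y (N ω) ω) = ∑' k, cpsF N Y l k ω := by
    intro ω
    rw [tsum_eq_single (N ω) (fun k hk => by simp only [cpsF]; rw [if_neg (fun h : N ω = k => hk h.symm), zero_mul])]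
    simp [cpsF]
  have hLHS : HasSum (fun k => ∫ ω, cpsF N Y l k ω ∂(ℙ : Measure Ω))
      (∫ ω, cpsS Y (N ω) ω * l (cpsS Y (N ω) ω) ∂(ℙ : Measure Ω)) := by
    have h := hasSum_integral_of_summable_integral_norm hf_int hf_sum
    have heq : ∫ ω, cpsS Y (N ω) ω * l (cpsS Y (N ω) ω) ∂(ℙ : Measure Ω)
        = ∫ ω, (∑' k, cpsF N Y l k ω) ∂(ℙ : Measure Ω) :=
      integral_congr_ae (Filter.Eventually.of_forall hpt1)
    rw [heq]
    exact h
  -- the RHS pieces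
  have hsplitg : ∀ m, ∫ ω, cpsG N Y l m ω ∂(ℙ : Measure Ω)
      = p m * ∫ ω, Y 0 ω * l (cpsS Y m ω + Y 0 ω) ∂(ℙ : Measure Ω) := by
    intro m
    have := cps_split N Y hmN hmY hIndep (fun j : Fin (m + 1) => (j : ℕ)) m
      (F := fun x => x 0 * l (∑ j, x j))
      ((measurable_pi_apply 0).mul (hl.comp (hsum_meas (m + 1))))
    simp only [cps_sum_split, Fin.val_zero] at this
    simpa only [cpsG] using this
  have hsplitgabs : ∀ m, ∫ ω, (if N ω = m then (1 : ℝ) else 0)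
        * |Y 0 ω * l (cpsS Y m ω + Y 0 ω)| ∂(ℙ : Measure Ω)
      = p m * ∫ ω, |Y 0 ω * l (cpsS Y m ω + Y 0 ω)| ∂(ℙ : Measure Ω) := by
    intro m
    have := cps_split N Y hmN hmY hIndep (fun j : Fin (m + 1) => (j : ℕ)) m
      (F := fun x => |x 0 * l (∑ j, x j)|)
      ((measurable_pi_apply 0).mul (hl.comp (hsum_meas (m + 1)))).abs
    simpa only [cps_sum_split, Fin.val_zero] using this
  have hg_int : ∀ m, Integrable (cpsG N Y l m) (ℙ : Measure Ω) := by
    intro m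
    have h1 := hmix (Y 0) (fun ω => cpsS Y m ω + Y 0 ω) hint ((hSmeas m).add (hmY 0))
    exact h1.bdd_mul (c := 1) ((measurable_of_countable (fun n => if n = m then (1 : ℝ) else 0)).comp
        hmN).aestronglyMeasurable
      (Filter.Eventually.of_forall fun ω => by by_cases h : N ω = m <;> simp [h])
  have habsYl : ∀ m, ∫ ω, |Y 0 ω * l (cpsS Y m ω + Y 0 ω)| ∂(ℙ : Measure Ω) ≤ C * M := by
    intro m
    have h1 : ∫ ω, |Y 0 ω * l (cpsS Y m ω + Y 0 ω)| ∂(ℙ : Measure Ω)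
        ≤ ∫ ω, C * |Y 0 ω| ∂(ℙ : Measure Ω) := by
      refine integral_mono (hmix _ _ hint ((hSmeas m).add (hmY 0))).abs
        (hint.abs.const_mul C) ?_
      intro ω
      show |Y 0 ω * l (cpsS Y m ω + Y 0 ω)| ≤ C * |Y 0 ω|
      rw [abs_mul]
      calc |Y 0 ω| * |l (cpsS Y m ω + Y 0 ω)| ≤ |Y 0 ω| * C :=
            mul_le_mul_of_nonneg_left (hC _) (abs_nonneg _)
        _ = C * |Y 0 ω| := mul_comm _ _
    rw [integral_const_mul] at h1
    exact h1
  have hgnorm : ∀ m, ∫ ω, ‖cpsG N Y l m ω‖ ∂(ℙ : Measure Ω)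
      = p m * ∫ ω, |Y 0 ω * l (cpsS Y m ω + Y 0 ω)| ∂(ℙ : Measure Ω) := by
    intro m
    have heq : (fun ω => ‖cpsG N Y l m ω‖)
        = fun ω => (if N ω = m then (1 : ℝ) else 0) * |Y 0 ω * l (cpsS Y m ω + Y 0 ω)| := by
      funext ω
      by_cases h : N ω = m <;> simp [cpsG, h, Real.norm_eq_abs, abs_mul]
    rw [heq]
    exact hsplitgabs m
  have hg_sum : Summable fun m => ∫ ω, ‖cpsG N Y l m ω‖ ∂(ℙ : Measure Ω) := by
    refine Summable.of_nonneg_of_le (fun m => integral_nonneg fun ω => norm_nonneg _)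
      (fun m => ?_) (f := fun m : ℕ => (C * M) * poissonPMFReal θ m) ?_
    · rw [hgnorm m, hppmf m]
      calc poissonPMFReal θ m * ∫ ω, |Y 0 ω * l (cpsS Y m ω + Y 0 ω)| ∂(ℙ : Measure Ω)
          ≤ poissonPMFReal θ m * (C * M) :=
            mul_le_mul_of_nonneg_left (habsYl m) poissonPMFReal_nonneg
        _ = (C * M) * poissonPMFReal θ m := by ring
    · exact hqsum.mul_left _
  have hpt2 : ∀ ω, Y 0 ω * l (cpsS Y (N ω) ω + Y 0 ω) = ∑' k, cpsG N Y l k ω := by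
    intro ω
    rw [tsum_eq_single (N ω) (fun k hk => by simp only [cpsG]; rw [if_neg (fun h : N ω = k => hk h.symm), zero_mul])]
    simp [cpsG]
  have hRHS : HasSum (fun m => ∫ ω, cpsG N Y l m ω ∂(ℙ : Measure Ω))
      (∫ ω, Y 0 ω * l (cpsS Y (N ω) ω + Y 0 ω) ∂(ℙ : Measure Ω)) := by
    have h := hasSum_integral_of_summable_integral_norm hg_int hg_sum
    have heq : ∫ ω, Y 0 ω * l (cpsS Y (N ω) ω + Y 0 ω) ∂(ℙ : Measure Ω)
        = ∫ ω, (∑' k, cpsG N Y l k ω) ∂(ℙ : Measure Ω) :=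
      integral_congr_ae (Filter.Eventually.of_forall hpt2)
    rw [heq]
    exact h
  -- values of the LHS pieces
  have hf0 : ∫ ω, cpsF N Y l 0 ω ∂(ℙ : Measure Ω) = 0 := by
    have : ∀ ω : Ω, cpsF N Y l 0 ω = 0 := by
      intro ω; simp [cpsF, cpsS]
    simp only [this, integral_zero]
  have hfk : ∀ m : ℕ, ∫ ω, cpsF N Y l (m + 1) ω ∂(ℙ : Measure Ω)
      = p (m + 1) * (((m : ℝ) + 1)
        * ∫ ω, Y 0 ω * l (cpsS Y m ω + Y 0 ω) ∂(ℙ : Measure Ω)) := by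
    intro m
    rw [hsplitf (m + 1)]
    congr 1
    have hstep : ∫ ω, cpsS Y (m + 1) ω * l (cpsS Y (m + 1) ω) ∂(ℙ : Measure Ω)
        = ∑ i ∈ Finset.range (m + 1),
            ∫ ω, Y (i + 1) ω * l (cpsS Y (m + 1) ω) ∂(ℙ : Measure Ω) := by
      have hptw : ∀ ω : Ω, cpsS Y (m + 1) ω * l (cpsS Y (m + 1) ω)
          = ∑ i ∈ Finset.range (m + 1), Y (i + 1) ω * l (cpsS Y (m + 1) ω) := by
        intro ω
        rw [← Finset.sum_mul]
        rfl
      rw [integral_congr_ae (Filter.Eventually.of_forall hptw)]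
      exact integral_finset_sum _ fun i _ => hmix _ _ (hYint (i + 1)) (hSmeas (m + 1))
    rw [hstep]
    have : ∀ i ∈ Finset.range (m + 1),
        ∫ ω, Y (i + 1) ω * l (cpsS Y (m + 1) ω) ∂(ℙ : Measure Ω)
          = ∫ ω, Y 0 ω * l (cpsS Y m ω + Y 0 ω) ∂(ℙ : Measure Ω) := by
      intro i hi
      exact cps_exchange N Y l hmY hIndep hident hl m ⟨i, Finset.mem_range.1 hi⟩
    rw [Finset.sum_congr rfl this, Finset.sum_const, Finset.card_range, nsmul_eq_mul]
    push_cast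
    ring
  -- assemble
  calc ∫ ω, cpsS Y (N ω) ω * l (cpsS Y (N ω) ω) ∂(ℙ : Measure Ω)
      = ∑' k, ∫ ω, cpsF N Y l k ω ∂(ℙ : Measure Ω) := hLHS.tsum_eq.symm
    _ = (∫ ω, cpsF N Y l 0 ω ∂(ℙ : Measure Ω))
        + ∑' m, ∫ ω, cpsF N Y l (m + 1) ω ∂(ℙ : Measure Ω) :=
          Summable.tsum_eq_zero_add hLHS.summable
    _ = ∑' m, (θ : ℝ) * (p m * ∫ ω, Y 0 ω * l (cpsS Y m ω + Y 0 ω) ∂(ℙ : Measure Ω)) := by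
          rw [hf0, zero_add]
          refine tsum_congr fun m => ?_
          rw [hfk m, hppmf (m + 1), hppmf m]
          linear_combination (∫ ω, Y 0 ω * l (cpsS Y m ω + Y 0 ω) ∂(ℙ : Measure Ω)) * hpois m
    _ = (θ : ℝ) * ∑' m, p m * ∫ ω, Y 0 ω * l (cpsS Y m ω + Y 0 ω) ∂(ℙ : Measure Ω) :=
          tsum_mul_left
    _ = (θ : ℝ) * ∑' m, ∫ ω, cpsG N Y l m ω ∂(ℙ : Measure Ω) := by
          rw [tsum_congr fun m => (hsplitg m).symm]
    _ = (θ : ℝ) * ∫ ω, Y 0 ω * l (cpsS Y (N ω) ω + Y 0 ω) ∂(ℙ : Measure Ω) := by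
          rw [hRHS.tsum_eq]

end CPSHelpers

/-- **Compound Poisson Chen–Stein identity.**
Let `(Y_i)` be i.i.d. integrable random variables, independent of a Poisson
variable `N` with parameter `θ` (the whole family `N, Y₀, Y₁, …` being mutually
independent, with `Y' = Y₀` playing the role of the independent copy and the sum
taken over `Y₁, …, Y_N`).  Then for any bounded measurable `l`,
`E[(Σ_{i=1}^N Y_i) · l(Σ_{i=1}^N Y_i)] = θ · E[Y' · l(Σ_{i=1}^N Y_i + Y')]`. -/
theorem compound_poisson_chen_stein
    {Ω : Type*} [MeasureSpace Ω] [IsProbabilityMeasure (ℙ : Measure Ω)]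
    (θ : NNReal) (hθ : 0 < θ)
    (N : Ω → ℕ) (Y : ℕ → Ω → ℝ)
    (hIndep : iIndepFun (jumpFamily N Y) ℙ)
    (hident : ∀ i : ℕ, Measure.map (Y i) ℙ = Measure.map (Y 0) ℙ)
    (hint : Integrable (Y 0) (ℙ : Measure Ω))
    (hN : Measure.map N ℙ = (poissonPMF θ).toMeasure)
    (l : ℝ → ℝ) (hl : Measurable l) (hbdd : ∃ C : ℝ, ∀ x : ℝ, |l x| ≤ C) :
    ∫ ω, (∑ i ∈ Finset.range (N ω), Y (i + 1) ω)
        * l (∑ i ∈ Finset.range (N ω), Y (i + 1) ω) ∂(ℙ : Measure Ω)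
      = (θ : ℝ) * ∫ ω, Y 0 ω
          * l ((∑ i ∈ Finset.range (N ω), Y (i + 1) ω) + Y 0 ω) ∂(ℙ : Measure Ω) := by
  have hY0ae : AEMeasurable (Y 0) (ℙ : Measure Ω) := hint.aemeasurable
  have hNae : AEMeasurable N (ℙ : Measure Ω) := by
    by_contra h
    have h1 : ((poissonPMF θ).toMeasure : Measure ℕ) Set.univ = 1 := measure_univ
    rw [← hN, Measure.map_of_not_aemeasurable h] at h1
    simp at h1
  have hYae : ∀ i, AEMeasurable (Y i) (ℙ : Measure Ω) := by
    intro i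
    by_contra h
    haveI : IsProbabilityMeasure (Measure.map (Y 0) (ℙ : Measure Ω)) :=
      Measure.isProbabilityMeasure_map hY0ae
    have h1 : (Measure.map (Y 0) (ℙ : Measure Ω)) Set.univ = 1 := measure_univ
    rw [← hident i, Measure.map_of_not_aemeasurable h] at h1
    simp at h1
  set N' := hNae.mk N with hN'def
  set Y' := fun i => (hYae i).mk (Y i) with hY'def
  have hNeq : N =ᵐ[ℙ] N' := hNae.ae_eq_mk
  have hYeq : ∀ i, Y i =ᵐ[ℙ] Y' i := fun i => (hYae i).ae_eq_mk
  have hmN' : Measurable N' := hNae.measurable_mk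
  have hmY' : ∀ i, Measurable (Y' i) := fun i => (hYae i).measurable_mk
  have hfam : ∀ o : Option ℕ, jumpFamily N Y o =ᵐ[ℙ] jumpFamily N' Y' o := by
    rintro (_ | i)
    · exact hNeq
    · exact hYeq i
  have hIndep' : iIndepFun (jumpFamily N' Y') ℙ :=
    iIndepFun_congr_ae hIndep hfam
  have hident' : ∀ i, Measure.map (Y' i) ℙ = Measure.map (Y' 0) ℙ := by
    intro i
    rw [← Measure.map_congr (hYeq i), ← Measure.map_congr (hYeq 0)]
    exact hident i
  have hint' : Integrable (Y' 0) (ℙ : Measure Ω) := hint.congr (hYeq 0)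
  have hN'' : Measure.map N' ℙ = (poissonPMF θ).toMeasure := by
    rw [← Measure.map_congr hNeq]; exact hN
  have key := cps_main N' Y' l θ hmN' hmY' hIndep' hident' hint' hN'' hl hbdd
  have hae : ∀ᵐ ω ∂(ℙ : Measure Ω), N ω = N' ω ∧ ∀ i, Y i ω = Y' i ω :=
    hNeq.and (ae_all_iff.2 hYeq)
  have hsum : ∀ᵐ ω ∂(ℙ : Measure Ω),
      (∑ i ∈ Finset.range (N ω), Y (i + 1) ω) = cpsS Y' (N' ω) ω := by
    filter_upwards [hae] with ω h
    obtain ⟨h1, h2⟩ := h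
    show _ = ∑ i ∈ Finset.range (N' ω), Y' (i + 1) ω
    rw [← h1]
    exact Finset.sum_congr rfl fun i _ => h2 (i + 1)
  have hL : ∫ ω, (∑ i ∈ Finset.range (N ω), Y (i + 1) ω)
        * l (∑ i ∈ Finset.range (N ω), Y (i + 1) ω) ∂(ℙ : Measure Ω)
      = ∫ ω, cpsS Y' (N' ω) ω * l (cpsS Y' (N' ω) ω) ∂(ℙ : Measure Ω) := by
    refine integral_congr_ae ?_
    filter_upwards [hsum] with ω h
    rw [h]
  have hR : ∫ ω, Y 0 ω
        * l ((∑ i ∈ Finset.range (N ω), Y (i + 1) ω) + Y 0 ω) ∂(ℙ : Measure Ω)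
      = ∫ ω, Y' 0 ω * l (cpsS Y' (N' ω) ω + Y' 0 ω) ∂(ℙ : Measure Ω) := by
    refine integral_congr_ae ?_
    filter_upwards [hsum, hYeq 0] with ω h h0
    rw [h, h0]
  rw [hL, hR]
  exact key
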